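/- lim_{n → ∞, n ∈ ℕ} √n · (1/π) ∫_{-∞}^{∞} (sin t / t)^{2n} dt = √(3/π). -/

import Mathlib

open MeasureTheory Real

/-- `(sin t / t)^2`, extended continuously by `1` at `t = 0`. -/
noncomputable def sinc2 (t : ℝ) : ℝ := if t = 0 then 1 else Real.sin t ^ 2 / t ^ 2

open Filter Set

lemma sinc2_zero : sinc2 0 = 1 := by simp [sinc2]

lemma sinc2_of_ne {t : ℝ} (h : t ≠ 0) : sinc2 t = Real.sin t ^ 2 / t ^ 2 := by
  simp [sinc2, h]

lemma sinc2_nonneg (t : ℝ) : 0 ≤ sinc2 t := by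
  rcases eq_or_ne t 0 with rfl | h
  · simp [sinc2]
  · rw [sinc2_of_ne h]; positivity

lemma sinc2_le_one (t : ℝ) : sinc2 t ≤ 1 := by
  rcases eq_or_ne t 0 with rfl | h
  · simp [sinc2]
  · rw [sinc2_of_ne h, div_le_one (by positivity)]
    exact Real.sin_sq_le_sq

lemma sinc2_lt_one {t : ℝ} (h : t ≠ 0) : sinc2 t < 1 := by
  rw [sinc2_of_ne h, div_lt_one (by positivity)]
  exact Real.sin_sq_lt_sq h

lemma sinc2_le_inv_sq {t : ℝ} (h : t ≠ 0) : sinc2 t ≤ (t ^ 2)⁻¹ := by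
  rw [sinc2_of_ne h, div_eq_mul_inv]
  calc Real.sin t ^ 2 * (t ^ 2)⁻¹ ≤ 1 * (t ^ 2)⁻¹ :=
        mul_le_mul_of_nonneg_right (Real.sin_sq_le_one t) (by positivity)
    _ = (t ^ 2)⁻¹ := one_mul _

lemma sinc2_neg (t : ℝ) : sinc2 (-t) = sinc2 t := by
  rcases eq_or_ne t 0 with rfl | h
  · simp
  · rw [sinc2_of_ne (neg_ne_zero.mpr h), sinc2_of_ne h]
    simp [Real.sin_neg]

lemma sinc2_abs (t : ℝ) : sinc2 |t| = sinc2 t := by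
  rcases abs_cases t with ⟨h, _⟩ | ⟨h, _⟩ <;> rw [h]
  exact sinc2_neg t

lemma sinc2_pos {t : ℝ} (h1 : |t| ≤ 1) : 0 < sinc2 t := by
  rcases eq_or_ne t 0 with rfl | h
  · simp [sinc2]
  · rw [← sinc2_abs t, sinc2_of_ne (by simpa using h)]
    apply div_pos _ (by positivity)
    have hpos : 0 < Real.sin |t| :=
      Real.sin_pos_of_pos_of_lt_pi (abs_pos.mpr h)
        (lt_of_le_of_lt h1 (by linarith [Real.pi_gt_three]))
    positivity

lemma sinc2_est {t : ℝ} (ht : |t| ≤ 1) :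
    |sinc2 t - (1 - t ^ 2 / 3 + t ^ 4 / 36)| ≤ 5 / 48 * |t| ^ 3 := by
  rcases eq_or_ne t 0 with rfl | h
  · norm_num [sinc2_zero]
  · rw [sinc2_of_ne h]
    have htt : t ^ 2 ≤ 1 := by nlinarith [sq_abs t, abs_nonneg t]
    have hb := Real.sin_bound ht
    have ht2 : (0 : ℝ) < t ^ 2 := by positivity
    have hp : |t - t ^ 3 / 6| ≤ |t| := by
      rw [show t - t ^ 3 / 6 = t * (1 - t ^ 2 / 6) by ring, abs_mul]
      have h1 : |1 - t ^ 2 / 6| ≤ 1 := by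
        rw [abs_le]
        constructor <;> nlinarith [sq_abs t, sq_nonneg t, htt]
      calc |t| * |1 - t ^ 2 / 6| ≤ |t| * 1 := by gcongr
        _ = |t| := mul_one _
    have hs : |Real.sin t| ≤ |t| := Real.abs_sin_le_abs
    have key : |Real.sin t ^ 2 - (t - t ^ 3 / 6) ^ 2| ≤ 5 / 48 * |t| ^ 5 := by
      rw [show Real.sin t ^ 2 - (t - t ^ 3 / 6) ^ 2
          = (Real.sin t - (t - t ^ 3 / 6)) * (Real.sin t + (t - t ^ 3 / 6)) by ring, abs_mul]
      have h2 : |Real.sin t + (t - t ^ 3 / 6)| ≤ 2 * |t| :=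
        (abs_add_le _ _).trans (by linarith)
      calc |Real.sin t - (t - t ^ 3 / 6)| * |Real.sin t + (t - t ^ 3 / 6)|
          ≤ (|t| ^ 4 * (5 / 96)) * (2 * |t|) := by
            apply mul_le_mul (hb.trans (by nlinarith [pow_nonneg (abs_nonneg t) 4, abs_nonneg t, ht])) h2 (abs_nonneg _) (by positivity)
        _ = 5 / 48 * |t| ^ 5 := by ring
    have heq : Real.sin t ^ 2 / t ^ 2 - (1 - t ^ 2 / 3 + t ^ 4 / 36)
        = (Real.sin t ^ 2 - (t - t ^ 3 / 6) ^ 2) / t ^ 2 := by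
      field_simp
      ring
    rw [heq, abs_div, abs_of_pos ht2, div_le_iff₀ ht2]
    calc |Real.sin t ^ 2 - (t - t ^ 3 / 6) ^ 2| ≤ 5 / 48 * |t| ^ 5 := key
      _ = 5 / 48 * |t| ^ 3 * t ^ 2 := by rw [← sq_abs t]; ring

lemma sinc2_upper {t : ℝ} (ht : |t| ≤ 1) : sinc2 t ≤ 1 - 29 / 144 * t ^ 2 := by
  have h := (abs_le.mp (sinc2_est ht)).2
  have e2 : |t| ^ 2 = t ^ 2 := sq_abs t
  have h3 : |t| ^ 3 ≤ t ^ 2 := by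
    calc |t| ^ 3 = |t| * |t| ^ 2 := by ring
      _ ≤ 1 * |t| ^ 2 := by gcongr
      _ = t ^ 2 := by rw [one_mul, e2]
  have h4 : t ^ 4 ≤ t ^ 2 := by nlinarith [sq_abs t, abs_nonneg t, sq_nonneg t]
  linarith

lemma measurable_sinc2 : Measurable sinc2 := by
  unfold sinc2
  exact Measurable.ite (measurableSet_eq) measurable_const
    ((Real.measurable_sin.pow_const 2).div (measurable_id.pow_const 2))

lemma integrable_sinc2_pow {n : ℕ} (hn : 1 ≤ n) :
    Integrable (fun t : ℝ => sinc2 t ^ n) := by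
  have hg : Integrable (fun x : ℝ => 2 * (1 + x ^ 2)⁻¹) :=
    integrable_inv_one_add_sq.const_mul 2
  refine hg.mono' ((measurable_sinc2.pow_const n).aestronglyMeasurable) ?_
  filter_upwards with t
  rw [Real.norm_eq_abs, abs_of_nonneg (pow_nonneg (sinc2_nonneg t) n)]
  have h0 : (0 : ℝ) < 1 + t ^ 2 := by positivity
  rcases le_or_gt (t ^ 2) 1 with h | h
  · calc sinc2 t ^ n ≤ 1 ^ n := pow_le_pow_left₀ (sinc2_nonneg t) (sinc2_le_one t) n
      _ = 1 := one_pow n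
      _ ≤ 2 * (1 + t ^ 2)⁻¹ := by
          rw [show (2 : ℝ) * (1 + t ^ 2)⁻¹ = 2 / (1 + t ^ 2) by ring, le_div_iff₀ h0]
          linarith
  · have ht : t ≠ 0 := by intro h0'; rw [h0'] at h; norm_num at h
    calc sinc2 t ^ n ≤ sinc2 t := pow_le_of_le_one (sinc2_nonneg t) (sinc2_le_one t) (by omega)
      _ ≤ (t ^ 2)⁻¹ := sinc2_le_inv_sq ht
      _ ≤ 2 * (1 + t ^ 2)⁻¹ := by
          rw [show (2 : ℝ) * (1 + t ^ 2)⁻¹ = 2 / (1 + t ^ 2) by ring,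
            show (t ^ 2 : ℝ)⁻¹ = 1 / t ^ 2 by ring, div_le_div_iff₀ (by positivity) h0]
          nlinarith

lemma tendsto_log_sinc2 :
    Tendsto (fun t : ℝ => Real.log (sinc2 t) / t ^ 2) (nhdsWithin 0 {(0 : ℝ)}ᶜ)
      (nhds (-(1 / 3))) := by
  have hmem : ∀ᶠ t in nhdsWithin (0 : ℝ) {(0 : ℝ)}ᶜ, |t| ≤ 1 ∧ t ≠ 0 := by
    have h1 : ∀ᶠ t in nhds (0 : ℝ), |t| ≤ 1 := by
      have : Set.Icc (-1 : ℝ) 1 ∈ nhds (0 : ℝ) := Icc_mem_nhds (by norm_num) (by norm_num)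
      filter_upwards [this] with t ht using abs_le.mpr ⟨ht.1, ht.2⟩
    exact ((eventually_nhdsWithin_of_eventually_nhds h1).and
      eventually_mem_nhdsWithin).mono fun t h => ⟨h.1, h.2⟩
  set u : ℝ → ℝ := fun t => sinc2 t - 1 with hu_def
  have hu_ne : ∀ᶠ t in nhdsWithin (0 : ℝ) {(0 : ℝ)}ᶜ, u t ≠ 0 := by
    filter_upwards [hmem] with t ht
    have := sinc2_lt_one ht.2
    simp only [hu_def]
    intro hc
    have : sinc2 t = 1 := by linarith [sub_eq_zero.mp hc]
    linarith [sinc2_lt_one ht.2]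
  have hu_small : ∀ᶠ t in nhdsWithin (0 : ℝ) {(0 : ℝ)}ᶜ, ‖u t‖ ≤ t ^ 2 := by
    filter_upwards [hmem] with t ht
    have h := abs_le.mp (sinc2_est ht.1)
    have e2 : |t| ^ 2 = t ^ 2 := sq_abs t
    have htt : t ^ 2 ≤ 1 := by nlinarith [sq_abs t, abs_nonneg t, ht.1]
    have h3 : |t| ^ 3 ≤ t ^ 2 := by
      calc |t| ^ 3 = |t| * |t| ^ 2 := by ring
        _ ≤ 1 * |t| ^ 2 := by gcongr; exact ht.1
        _ = t ^ 2 := by rw [one_mul, e2]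
    have h4 : t ^ 4 ≤ t ^ 2 := by nlinarith [sq_nonneg t]
    rw [Real.norm_eq_abs, abs_le]
    constructor <;> simp only [hu_def] <;> nlinarith [sq_nonneg t]
  have hu0 : Tendsto u (nhdsWithin (0 : ℝ) {(0 : ℝ)}ᶜ) (nhds 0) := by
    apply squeeze_zero_norm' hu_small
    have : Tendsto (fun t : ℝ => t ^ 2) (nhds 0) (nhds 0) := by
      simpa using (continuous_pow 2).tendsto (0 : ℝ)
    exact this.mono_left nhdsWithin_le_nhds
  have hu : Tendsto u (nhdsWithin (0 : ℝ) {(0 : ℝ)}ᶜ) (nhdsWithin (0 : ℝ) {(0 : ℝ)}ᶜ) :=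
    tendsto_nhdsWithin_iff.mpr ⟨hu0, hu_ne.mono fun t h => by simpa using h⟩
  have hlog1 : Tendsto (fun y : ℝ => Real.log y / (y - 1)) (nhdsWithin 1 {(1 : ℝ)}ᶜ)
      (nhds 1) := by
    have h := hasDerivAt_iff_tendsto_slope.mp (Real.hasDerivAt_log one_ne_zero)
    rw [inv_one] at h
    refine h.congr fun y => ?_
    rw [slope_def_field]
    rw [Real.log_one]
    ring
  have hcomp1 : Tendsto (fun t => 1 + u t) (nhdsWithin (0 : ℝ) {(0 : ℝ)}ᶜ)
      (nhdsWithin 1 {(1 : ℝ)}ᶜ) := by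
    refine tendsto_nhdsWithin_iff.mpr ⟨?_, ?_⟩
    · simpa using tendsto_const_nhds.add hu0
    · filter_upwards [hu_ne] with t h
      simp only [mem_compl_iff, mem_singleton_iff]
      intro hc
      exact h (by linarith)
  have hfac1 : Tendsto (fun t => Real.log (1 + u t) / u t)
      (nhdsWithin (0 : ℝ) {(0 : ℝ)}ᶜ) (nhds 1) := by
    have := hlog1.comp hcomp1
    refine this.congr fun t => ?_
    simp [Function.comp]
  have hfac2 : Tendsto (fun t => u t / t ^ 2) (nhdsWithin (0 : ℝ) {(0 : ℝ)}ᶜ)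
      (nhds (-(1 / 3))) := by
    rw [← tendsto_sub_nhds_zero_iff]
    have hb : ∀ᶠ t in nhdsWithin (0 : ℝ) {(0 : ℝ)}ᶜ,
        ‖u t / t ^ 2 - -(1 / 3)‖ ≤ |t| := by
      filter_upwards [hmem] with t ht
      obtain ⟨h1, h0⟩ := ht
      have h := abs_le.mp (sinc2_est h1)
      have ht2 : (0 : ℝ) < t ^ 2 := by positivity
      have e2 : |t| ^ 2 = t ^ 2 := sq_abs t
      have e3 : |t| ^ 3 = |t| * t ^ 2 := by rw [← e2]; ring
      have h4 : t ^ 4 ≤ |t| * t ^ 2 := by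
        nlinarith [sq_nonneg t, abs_nonneg t, sq_abs t]
      have e : u t / t ^ 2 - -(1 / 3) = (u t + t ^ 2 / 3) / t ^ 2 := by
        rw [sub_neg_eq_add, add_div]
        congr 1
        field_simp
      rw [Real.norm_eq_abs, e, abs_div, abs_of_pos ht2, div_le_iff₀ ht2]
      rw [abs_le]
      constructor <;> simp only [hu_def] <;> nlinarith [abs_nonneg t]
    have habs : Tendsto (fun t : ℝ => |t|) (nhdsWithin (0 : ℝ) {(0 : ℝ)}ᶜ) (nhds 0) := by
      have : Tendsto (fun t : ℝ => |t|) (nhds 0) (nhds 0) := by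
        simpa using continuous_abs.tendsto (0 : ℝ)
      exact this.mono_left nhdsWithin_le_nhds
    exact squeeze_zero_norm' hb habs
  have hmul := hfac1.mul hfac2
  rw [one_mul] at hmul
  refine Tendsto.congr' ?_ hmul
  filter_upwards [hmem, hu_ne] with t ht hne
  have h1u : 1 + u t = sinc2 t := by simp [hu_def]
  rw [h1u, div_mul_div_comm, mul_comm (Real.log (sinc2 t)) (u t),
    mul_div_mul_left _ _ hne]

lemma tendsto_sqrt_nat : Tendsto (fun n : ℕ => Real.sqrt n) atTop atTop := by
  have h := (tendsto_rpow_atTop (y := (1 / 2 : ℝ)) (by norm_num)).comp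
    tendsto_natCast_atTop_atTop (α := ℕ)
  refine h.congr fun n => ?_
  simp only [Function.comp_apply]
  exact (Real.sqrt_eq_rpow _).symm

lemma tendsto_pointwise (s : ℝ) :
    Tendsto (fun n : ℕ => sinc2 (s / Real.sqrt n) ^ n) atTop
      (nhds (Real.exp (-(1 / 3) * s ^ 2))) := by
  rcases eq_or_ne s 0 with rfl | hs
  · simpa [sinc2_zero] using tendsto_const_nhds (α := ℝ) (f := atTop (α := ℕ))
  · have h0 : Tendsto (fun n : ℕ => s / Real.sqrt n) atTop (nhds 0) := by
      have h1 := tendsto_sqrt_nat.inv_tendsto_atTop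
      have h2 := h1.const_mul s
      simpa [div_eq_mul_inv] using h2
    have hne : ∀ᶠ n : ℕ in atTop, s / Real.sqrt n ≠ 0 := by
      filter_upwards [eventually_ge_atTop 1] with n hn
      have hp : (0 : ℝ) < Real.sqrt n :=
        Real.sqrt_pos.mpr (by exact_mod_cast Nat.pos_of_ne_zero (by omega))
      exact div_ne_zero hs (ne_of_gt hp)
    have htn : Tendsto (fun n : ℕ => s / Real.sqrt n) atTop
        (nhdsWithin (0 : ℝ) {(0 : ℝ)}ᶜ) :=
      tendsto_nhdsWithin_iff.mpr ⟨h0, hne.mono fun n h => by simpa using h⟩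
    have hkey := tendsto_log_sinc2.comp htn
    simp only [Function.comp_def] at hkey
    have hmul := hkey.const_mul (s ^ 2)
    have heq : ∀ᶠ n : ℕ in atTop,
        s ^ 2 * (Real.log (sinc2 (s / Real.sqrt n)) / (s / Real.sqrt n) ^ 2)
          = (n : ℝ) * Real.log (sinc2 (s / Real.sqrt n)) := by
      filter_upwards [eventually_ge_atTop 1] with n hn
      have hn0 : (0 : ℝ) < n := by exact_mod_cast (by omega : 0 < n)
      have hsq : Real.sqrt n ^ 2 = (n : ℝ) := Real.sq_sqrt hn0.le
      have hsn : Real.sqrt n ≠ 0 := ne_of_gt (Real.sqrt_pos.mpr hn0)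
      rw [div_pow, hsq]
      field_simp
    have hlim : Tendsto (fun n : ℕ => (n : ℝ) * Real.log (sinc2 (s / Real.sqrt n)))
        atTop (nhds (s ^ 2 * -(1 / 3))) := by
      refine Tendsto.congr' ?_ hmul
      exact heq
    have hexp := (Real.continuous_exp.tendsto _).comp hlim
    rw [show s ^ 2 * -(1 / 3) = -(1 / 3) * s ^ 2 from mul_comm _ _] at hexp
    refine Tendsto.congr' ?_ hexp
    have hsmall : ∀ᶠ n : ℕ in atTop, |s / Real.sqrt n| ≤ 1 := by
      have := (Metric.tendsto_nhds.mp h0) 1 one_pos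
      filter_upwards [this] with n hn
      rw [Real.dist_eq, sub_zero] at hn
      exact hn.le
    filter_upwards [hsmall] with n hn
    have hpos : 0 < sinc2 (s / Real.sqrt n) := sinc2_pos hn
    simp only [Function.comp_apply]
    rw [Real.exp_nat_mul, Real.exp_log hpos]

lemma tail_bound {n : ℕ} (hn : 1 ≤ n) :
    ∫ t in (Icc (-1 : ℝ) 1)ᶜ, sinc2 t ^ n ≤ 2 / n := by
  have hint := integrable_sinc2_pow hn
  have hn0 : (0 : ℝ) < n := by exact_mod_cast (by omega : 0 < n)
  have hn1 : (1 : ℝ) ≤ n := by exact_mod_cast hn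
  have ha : -(2 * (n : ℝ)) < -1 := by linarith
  have hid : ∀ x : ℝ, Set.indicator (Icc (-1 : ℝ) 1)ᶜ (fun t => sinc2 t ^ n) x
      = Set.indicator (Ioi (1 : ℝ)) (fun t => sinc2 t ^ n) |x| := by
    intro x
    have hmem : x ∈ (Icc (-1 : ℝ) 1)ᶜ ↔ |x| ∈ Ioi (1 : ℝ) := by
      simp [Set.mem_Icc, Set.mem_Ioi, ← abs_le, not_le]
    by_cases hx : x ∈ (Icc (-1 : ℝ) 1)ᶜ
    · rw [Set.indicator_of_mem hx, Set.indicator_of_mem (hmem.mp hx)]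
      rw [sinc2_abs]
    · rw [Set.indicator_of_notMem hx,
        Set.indicator_of_notMem (fun h => hx (hmem.mpr h))]
  have h1 : ∫ t in (Icc (-1 : ℝ) 1)ᶜ, sinc2 t ^ n
      = 2 * ∫ t in Ioi (1 : ℝ), sinc2 t ^ n := by
    rw [← integral_indicator measurableSet_Icc.compl]
    calc ∫ x, Set.indicator (Icc (-1 : ℝ) 1)ᶜ (fun t => sinc2 t ^ n) x
        = ∫ x, Set.indicator (Ioi (1 : ℝ)) (fun t => sinc2 t ^ n) |x| :=
          integral_congr_ae (Filter.Eventually.of_forall hid)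
      _ = 2 * ∫ x in Ioi (0 : ℝ), Set.indicator (Ioi (1 : ℝ)) (fun t => sinc2 t ^ n) x :=
          integral_comp_abs
      _ = 2 * ∫ x in Ioi (1 : ℝ), sinc2 x ^ n := by
          rw [setIntegral_indicator measurableSet_Ioi]
          congr 1
          rw [Set.Ioi_inter_Ioi]
          norm_num
  have h2 : ∫ t in Ioi (1 : ℝ), sinc2 t ^ n ≤ ∫ t in Ioi (1 : ℝ), t ^ (-(2 * (n : ℝ))) := by
    apply setIntegral_mono_on hint.integrableOn
      (integrableOn_Ioi_rpow_of_lt ha one_pos) measurableSet_Ioi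
    intro x hx
    have hx1 : (1 : ℝ) < x := hx
    have hx0 : (0 : ℝ) < x := lt_trans one_pos hx1
    have he : ((x ^ 2)⁻¹ : ℝ) ^ n = x ^ (-(2 * (n : ℝ))) := by
      rw [Real.rpow_neg hx0.le,
        show (2 * (n : ℝ)) = ((2 * n : ℕ) : ℝ) by push_cast; ring,
        Real.rpow_natCast, pow_mul, inv_pow]
    rw [← he]
    exact pow_le_pow_left₀ (sinc2_nonneg x) (sinc2_le_inv_sq hx0.ne') n
  have h3 : ∫ t in Ioi (1 : ℝ), t ^ (-(2 * (n : ℝ))) = 1 / (2 * n - 1) := by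
    rw [integral_Ioi_rpow_of_lt ha one_pos, Real.one_rpow,
      show -(2 * (n : ℝ)) + 1 = -(2 * (n : ℝ) - 1) by ring, div_neg, neg_div, neg_neg]
  calc ∫ t in (Icc (-1 : ℝ) 1)ᶜ, sinc2 t ^ n
      = 2 * ∫ t in Ioi (1 : ℝ), sinc2 t ^ n := h1
    _ ≤ 2 * (1 / (2 * n - 1)) := by rw [← h3]; linarith [h2]
    _ = 2 / (2 * n - 1) := by ring
    _ ≤ 2 / n := by gcongr <;> linarith

theorem sinc_integral_asymptotics_nat :
    Filter.Tendsto (fun n : ℕ => Real.sqrt n * ((1 / π) * ∫ t : ℝ, sinc2 t ^ n))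
      Filter.atTop (nhds (Real.sqrt (3 / π))) := by
  set F : ℕ → ℝ → ℝ := fun n =>
    Set.indicator (Icc (-Real.sqrt n) (Real.sqrt n))
      (fun s => sinc2 (s / Real.sqrt n) ^ n) with hF
  -- dominated convergence
  have hDCT : Tendsto (fun n : ℕ => ∫ s, F n s) atTop (nhds (Real.sqrt (3 * π))) := by
    have hmeas : ∀ n : ℕ, AEStronglyMeasurable (F n) volume := fun n =>
      (((measurable_sinc2.comp (measurable_id.div_const _)).pow_const n).indicator
        measurableSet_Icc).aestronglyMeasurable
    have hboundint : Integrable (fun s : ℝ => Real.exp (-(29 / 144) * s ^ 2)) :=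
      integrable_exp_neg_mul_sq (by norm_num)
    have hbound : ∀ n : ℕ, ∀ᵐ s : ℝ, ‖F n s‖ ≤ Real.exp (-(29 / 144) * s ^ 2) := by
      intro n
      filter_upwards with s
      by_cases hmem : s ∈ Icc (-Real.sqrt n) (Real.sqrt n)
      · rw [hF]
        simp only
        rw [Set.indicator_of_mem hmem, Real.norm_eq_abs,
          abs_of_nonneg (pow_nonneg (sinc2_nonneg _) _)]
        rcases Nat.eq_zero_or_pos n with rfl | hn
        · have hs0 : s = 0 := by
            have h1 := hmem.1
            have h2 := hmem.2
            simp [Real.sqrt_zero] at h1 h2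
            linarith
          subst hs0
          simp [Real.exp_nonneg]
        · have hn0 : (0 : ℝ) < n := by exact_mod_cast hn
          have hsq : Real.sqrt n ^ 2 = (n : ℝ) := Real.sq_sqrt hn0.le
          have hsp : 0 < Real.sqrt n := Real.sqrt_pos.mpr hn0
          have habs : |s / Real.sqrt n| ≤ 1 := by
            rw [abs_div, abs_of_pos hsp, div_le_one hsp]
            exact abs_le.mpr ⟨hmem.1, hmem.2⟩
          have h1 : sinc2 (s / Real.sqrt n) ≤ 1 - 29 / 144 * (s / Real.sqrt n) ^ 2 :=
            sinc2_upper habs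
          have h2 : (1 : ℝ) - 29 / 144 * (s / Real.sqrt n) ^ 2
              ≤ Real.exp (-(29 / 144) * (s / Real.sqrt n) ^ 2) := by
            have := Real.add_one_le_exp (-(29 / 144) * (s / Real.sqrt n) ^ 2)
            linarith
          calc sinc2 (s / Real.sqrt n) ^ n
              ≤ (Real.exp (-(29 / 144) * (s / Real.sqrt n) ^ 2)) ^ n :=
                pow_le_pow_left₀ (sinc2_nonneg _) (h1.trans h2) n
            _ = Real.exp ((n : ℝ) * (-(29 / 144) * (s / Real.sqrt n) ^ 2)) :=
                (Real.exp_nat_mul _ n).symm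
            _ = Real.exp (-(29 / 144) * s ^ 2) := by
                congr 1
                rw [div_pow, hsq]
                field_simp
      · rw [hF]
        simp only
        rw [Set.indicator_of_notMem hmem, norm_zero]
        positivity
    have hlim : ∀ᵐ s : ℝ, Tendsto (fun n : ℕ => F n s) atTop
        (nhds (Real.exp (-(1 / 3) * s ^ 2))) := by
      filter_upwards with s
      refine Tendsto.congr' ?_ (tendsto_pointwise s)
      filter_upwards [tendsto_sqrt_nat.eventually_ge_atTop |s|] with n hn
      have hmem : s ∈ Icc (-Real.sqrt n) (Real.sqrt n) := by
        rw [Set.mem_Icc, ← abs_le]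
        exact hn
      rw [hF]
      simp only
      rw [Set.indicator_of_mem hmem]
    have h := tendsto_integral_of_dominated_convergence _ hmeas hboundint hbound hlim
    rwa [integral_gaussian, show π / (1 / 3 : ℝ) = 3 * π by ring] at h
  -- substitution
  have hsub : ∀ n : ℕ, 1 ≤ n →
      Real.sqrt n * ∫ t in Icc (-1 : ℝ) 1, sinc2 t ^ n = ∫ s, F n s := by
    intro n hn
    have hn0 : (0 : ℝ) < n := by exact_mod_cast (by omega : 0 < n)
    have hsp : 0 < Real.sqrt n := Real.sqrt_pos.mpr hn0
    have hcv := MeasureTheory.Measure.integral_comp_div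
      (g := Set.indicator (Icc (-1 : ℝ) 1) (fun t => sinc2 t ^ n)) (Real.sqrt n)
    rw [abs_of_pos hsp, smul_eq_mul, integral_indicator measurableSet_Icc] at hcv
    rw [← hcv]
    apply integral_congr_ae
    filter_upwards with x
    have hiff : x / Real.sqrt n ∈ Icc (-1 : ℝ) 1 ↔ x ∈ Icc (-Real.sqrt n) (Real.sqrt n) := by
      rw [Set.mem_Icc, Set.mem_Icc, ← abs_le, ← abs_le, abs_div, abs_of_pos hsp,
        div_le_one hsp]
    by_cases hx : x ∈ Icc (-Real.sqrt n) (Real.sqrt n)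
    · rw [Set.indicator_of_mem (hiff.mpr hx), hF]
      simp only
      rw [Set.indicator_of_mem hx]
    · rw [Set.indicator_of_notMem (fun h => hx (hiff.mp h)), hF]
      simp only
      rw [Set.indicator_of_notMem hx]
  -- tail
  have hT0 : Tendsto (fun n : ℕ =>
      Real.sqrt n * ∫ t in (Icc (-1 : ℝ) 1)ᶜ, sinc2 t ^ n) atTop (nhds 0) := by
    have hupper : Tendsto (fun n : ℕ => 2 / Real.sqrt n) atTop (nhds 0) := by
      have h := tendsto_sqrt_nat.inv_tendsto_atTop.const_mul (2 : ℝ)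
      simpa [div_eq_mul_inv] using h
    apply tendsto_of_tendsto_of_tendsto_of_le_of_le' tendsto_const_nhds hupper
    · filter_upwards with n
      exact mul_nonneg (Real.sqrt_nonneg _)
        (setIntegral_nonneg measurableSet_Icc.compl fun x _ =>
          pow_nonneg (sinc2_nonneg x) n)
    · filter_upwards [eventually_ge_atTop 1] with n hn
      have hn0 : (0 : ℝ) < n := by exact_mod_cast (by omega : 0 < n)
      have hsp : 0 < Real.sqrt n := Real.sqrt_pos.mpr hn0
      calc Real.sqrt n * ∫ t in (Icc (-1 : ℝ) 1)ᶜ, sinc2 t ^ n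
          ≤ Real.sqrt n * (2 / n) := by
            apply mul_le_mul_of_nonneg_left (tail_bound hn) (Real.sqrt_nonneg _)
        _ = 2 / Real.sqrt n := by
            field_simp
            nlinarith [Real.mul_self_sqrt hn0.le]
  -- combine
  have hsplit : ∀ᶠ n : ℕ in atTop,
      Real.sqrt n * ((1 / π) * ∫ t : ℝ, sinc2 t ^ n)
        = (1 / π) * ((∫ s, F n s)
            + Real.sqrt n * ∫ t in (Icc (-1 : ℝ) 1)ᶜ, sinc2 t ^ n) := by
    filter_upwards [eventually_ge_atTop 1] with n hn
    have hdecomp : ∫ t : ℝ, sinc2 t ^ n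
        = (∫ t in Icc (-1 : ℝ) 1, sinc2 t ^ n)
          + ∫ t in (Icc (-1 : ℝ) 1)ᶜ, sinc2 t ^ n :=
      (integral_add_compl measurableSet_Icc (integrable_sinc2_pow hn)).symm
    rw [hdecomp, ← hsub n hn]
    ring
  have hlimit : Tendsto (fun n : ℕ => (1 / π) * ((∫ s, F n s)
      + Real.sqrt n * ∫ t in (Icc (-1 : ℝ) 1)ᶜ, sinc2 t ^ n)) atTop
      (nhds ((1 / π) * (Real.sqrt (3 * π) + 0))) :=
    (hDCT.add hT0).const_mul _
  have hval : (1 / π) * (Real.sqrt (3 * π) + 0) = Real.sqrt (3 / π) := by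
    rw [add_zero, show (3 : ℝ) / π = (3 * π) / π ^ 2 by field_simp,
      Real.sqrt_div (by positivity), Real.sqrt_sq Real.pi_pos.le]
    ring
  rw [← hval]
  exact Tendsto.congr' (Filter.EventuallyEq.symm hsplit) hlimit
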